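/- For every μ ∈ R^1, every k ∈ ℕ and every φ ∈ R^k: (i) π_d(μ ∘ φ) = 0 unless d ∈ {k−1, k, k+1}; (ii) π_{k+1}(μ ∘ φ) = μ · φ; and (iii) the component Λ_μ(φ) := π_{k−1}(μ ∘ φ) satisfies ⟨Λ_μ(φ), ψ⟩ = ⟨φ, σ(μ) · ψ⟩ for every ψ ∈ R^{k−1}. In particular μ ∘ φ = μ · φ + π_k(μ ∘ φ) + Λ_μ(φ), a three-term sum, where Λ_μ is the adjoint of multiplication by σ(μ). -/
import Mathlib


/-- A graded complex vector space `R = ⊕_{d ∈ ℕ} R^d` (encoded by the projections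
`π d`) with: an associative unital ℂ-bilinear product `mul` (the specialized star
product `∘`) satisfying the filtration bound; a Hermitian form `B` for which the
grading is orthogonal and which is nondegenerate on each graded piece; a
conjugate-linear grading-preserving involution `σ` satisfying the adjoint relation
`B (φ ∘ a) b = B a (b ∘ σ φ)`; and a commutative graded ℂ-algebra product `cmul`
which is the top-order term of `∘`: `π (j+k) (φ ∘ ψ) = φ · ψ` for `φ ∈ R^j`,
`ψ ∈ R^k`. -/
structure GradedStarAlgebra (R : Type*) [AddCommGroup R] [Module ℂ R] where
  π : ℕ → Module.End ℂ R
  π_idem : ∀ (d : ℕ) (v : R), π d (π d v) = π d v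
  π_orth : ∀ d e : ℕ, d ≠ e → ∀ v : R, π d (π e v) = 0
  π_fin : ∀ v : R, (Function.support fun d => π d v).Finite
  π_sum : ∀ v : R, ∑ᶠ d : ℕ, π d v = v
  mul : R →ₗ[ℂ] R →ₗ[ℂ] R
  one : R
  mul_assoc' : ∀ a b c : R, mul (mul a b) c = mul a (mul b c)
  one_mul' : ∀ a : R, mul one a = a
  mul_one' : ∀ a : R, mul a one = a
  B : R → R → ℂ
  B_add_left : ∀ a a' b : R, B (a + a') b = B a b + B a' b
  B_smul_left : ∀ (c : ℂ) (a b : R), B (c • a) b = c * B a b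
  B_conj : ∀ a b : R, B b a = (starRingEnd ℂ) (B a b)
  B_orth : ∀ j k : ℕ, j ≠ k → ∀ a b : R, π j a = a → π k b = b → B a b = 0
  B_nondeg : ∀ (d : ℕ) (a : R), π d a = a →
    (∀ b : R, π d b = b → B a b = 0) → a = 0
  σ : R → R
  σ_add : ∀ a b : R, σ (a + b) = σ a + σ b
  σ_smul : ∀ (c : ℂ) (a : R), σ (c • a) = (starRingEnd ℂ c) • σ a
  σ_invol : ∀ a : R, σ (σ a) = a
  σ_grade : ∀ (d : ℕ) (a : R), π d a = a → π d (σ a) = σ a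
  filt : ∀ (j k : ℕ) (a b : R), π j a = a → π k b = b →
    ∀ d : ℕ, j + k < d → π d (mul a b) = 0
  adj : ∀ φ a b : R, B (mul φ a) b = B a (mul b (σ φ))
  cmul : R →ₗ[ℂ] R →ₗ[ℂ] R
  cmul_comm : ∀ a b : R, cmul a b = cmul b a
  cmul_assoc : ∀ a b c : R, cmul (cmul a b) c = cmul a (cmul b c)
  cmul_one : ∀ a : R, cmul a one = a
  cmul_grade : ∀ (j k : ℕ) (a b : R), π j a = a → π k b = b →
    π (j + k) (cmul a b) = cmul a b
  top_term : ∀ (j k : ℕ) (a b : R), π j a = a → π k b = b →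
    π (j + k) (mul a b) = cmul a b


namespace GradedStarAlgebraAux

variable {R : Type*} [AddCommGroup R] [Module ℂ R] (S : GradedStarAlgebra R)

lemma B_zero_left (b : R) : S.B 0 b = 0 := by
  have := S.B_smul_left 0 0 b
  simpa using this

lemma B_zero_right (a : R) : S.B a 0 = 0 := by
  rw [S.B_conj, B_zero_left, map_zero]

/-- `B · ψ` as an additive monoid hom. -/
def Bhom (ψ : R) : R →+ ℂ :=
  AddMonoidHom.mk' (fun a => S.B a ψ) (fun a b => S.B_add_left a b ψ)

lemma B_pi_left (w ψ : R) (d : ℕ) (hψ : S.π d ψ = ψ) :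
    S.B w ψ = S.B (S.π d w) ψ := by
  conv_lhs => rw [← S.π_sum w]
  have hmap := (Bhom S ψ).map_finsum (S.π_fin w)
  simp only [Bhom, AddMonoidHom.mk'_apply] at hmap
  rw [hmap]
  refine finsum_eq_single _ d fun j hj => ?_
  exact S.B_orth j d hj _ _ (S.π_idem j w) hψ

lemma B_pi_right (w a : R) (d : ℕ) (ha : S.π d a = a) :
    S.B a w = S.B a (S.π d w) := by
  rw [S.B_conj, B_pi_left S w a d ha, ← S.B_conj]

end GradedStarAlgebraAux

open GradedStarAlgebraAux in
/-- For `μ ∈ R^1` and `φ ∈ R^k`: (i) `π d (μ ∘ φ) = 0` unless `d ∈ {k-1, k, k+1}`;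
(ii) `π (k+1) (μ ∘ φ) = μ · φ`; (iii) the component `Λ_μ(φ) = π (k-1) (μ ∘ φ)`
satisfies `⟨Λ_μ(φ), ψ⟩ = ⟨φ, σ(μ)·ψ⟩` for all `ψ ∈ R^{k-1}`; in particular
`μ ∘ φ = μ·φ + π k (μ ∘ φ) + Λ_μ(φ)` is a three-term sum, with `Λ_μ` the adjoint
of multiplication by `σ μ`. -/
theorem stmt_4 (R : Type*) [AddCommGroup R] [Module ℂ R] (S : GradedStarAlgebra R)
    (μ : R) (hμ : S.π 1 μ = μ) (k : ℕ) (φ : R) (hφ : S.π k φ = φ) :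
    (∀ d : ℕ, S.π d (S.mul μ φ) ≠ 0 → (d + 1 = k ∨ d = k ∨ d = k + 1)) ∧
    (S.π (k + 1) (S.mul μ φ) = S.cmul μ φ) ∧
    (∀ d : ℕ, d + 1 = k → ∀ ψ : R, S.π d ψ = ψ →
      S.B (S.π d (S.mul μ φ)) ψ = S.B φ (S.cmul (S.σ μ) ψ)) ∧
    (∀ d : ℕ, d + 1 = k →
      S.mul μ φ = S.cmul μ φ + S.π k (S.mul μ φ) + S.π d (S.mul μ φ)) := by

  set w := S.mul μ φ with hw
  have hσμ : S.π 1 (S.σ μ) = S.σ μ := S.σ_grade 1 μ hμ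
  -- key adjoint computation for ψ in degree d with d+1 ≤ k cases
  have key : ∀ (d : ℕ) (ψ : R), S.π d ψ = ψ →
      S.B (S.π d w) ψ = S.B φ (S.π k (S.mul ψ (S.σ μ))) := by
    intro d ψ hψ
    rw [← B_pi_left S w ψ d hψ, hw, S.adj, B_pi_right S _ φ k hφ]
  have part1 : ∀ d : ℕ, S.π d w ≠ 0 → (d + 1 = k ∨ d = k ∨ d = k + 1) := by
    intro d hd
    by_contra h
    push_neg at h
    obtain ⟨h1, h2, h3⟩ := h
    apply hd
    rcases lt_or_gt_of_ne h3 with hlt | hgt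
    · -- d < k+1, d ≠ k, d+1 ≠ k ⇒ d+1 < k
      have hdk : d + 1 < k := by omega
      refine S.B_nondeg d (S.π d w) (S.π_idem d w) fun ψ hψ => ?_
      rw [key d ψ hψ, S.filt d 1 ψ (S.σ μ) hψ hσμ k (by omega), B_zero_right]
    · exact S.filt 1 k μ φ hμ hφ d (by omega)
  have part2 : S.π (k + 1) w = S.cmul μ φ := by
    have := S.top_term 1 k μ φ hμ hφ
    rwa [Nat.add_comm] at this
  have part3 : ∀ d : ℕ, d + 1 = k → ∀ ψ : R, S.π d ψ = ψ →
      S.B (S.π d w) ψ = S.B φ (S.cmul (S.σ μ) ψ) := by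
    intro d hdk ψ hψ
    rw [key d ψ hψ]
    have htop : S.π k (S.mul ψ (S.σ μ)) = S.cmul ψ (S.σ μ) := by
      have := S.top_term d 1 ψ (S.σ μ) hψ hσμ
      rwa [hdk] at this
    rw [htop, S.cmul_comm]
  refine ⟨part1, part2, part3, ?_⟩
  intro d hdk
  have hsupp : (Function.support fun j => S.π j w) ⊆ ({d, k, k + 1} : Finset ℕ) := by
    intro j hj
    have := part1 j hj
    simp only [Finset.coe_insert, Finset.coe_singleton, Set.mem_insert_iff,
      Set.mem_singleton_iff]
    omega
  have hsum : ∑ᶠ j, S.π j w = ∑ j ∈ ({d, k, k + 1} : Finset ℕ), S.π j w :=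
    finsum_eq_finset_sum_of_support_subset _ hsupp
  have hd1 : d ∉ ({k, k + 1} : Finset ℕ) := by simp; omega
  have hd2 : k ∉ ({k + 1} : Finset ℕ) := by simp
  calc w = ∑ᶠ j, S.π j w := (S.π_sum w).symm
    _ = S.π d w + (S.π k w + S.π (k+1) w) := by
        rw [hsum, Finset.sum_insert hd1, Finset.sum_insert hd2, Finset.sum_singleton]
    _ = S.cmul μ φ + S.π k w + S.π d w := by rw [part2]; abel
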